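/- arXiv:1810.02270 — 2 statements merged into one kernel-verified Lean document; each statement's English description precedes it below -/
import Mathlib

section
/- Define `build : List α → Tree α` by `build [] = nil` and, for a nonempty list L of length n, `build L = node (build L₁) m (build L₂)` where m is the element of L at index ⌊n/2⌋, L₁ is the prefix of L of length ⌊n/2⌋, and L₂ is the suffix after position ⌊n/2⌋. Define `height nil = 0` and `height (node l a r) = 1 + max (height l) (height r)`. Then for every list L of length n, `height (build L) = Nat.clog 2 (n + 1)`; in particular, if n = 2^k − 1 then the height is exactly k. -/
/-- Binary trees over a type `α`. -/
inductive BTree (α : Type*) where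
  | nil : BTree α
  | node (l : BTree α) (a : α) (r : BTree α) : BTree α

namespace BTree

variable {α : Type*}

/-- In-order traversal. -/
def inorder : BTree α → List α
  | nil => []
  | node l a r => inorder l ++ [a] ++ inorder r

/-- Key membership in a tree. -/
def Mem : BTree α → α → Prop
  | nil, _ => False
  | node l a r, x => Mem l x ∨ x = a ∨ Mem r x

/-- Number of nodes of a tree. -/
def size : BTree α → ℕ
  | nil => 0
  | node l _ r => size l + 1 + size r

/-- Build a tree from a list by recursive bisection: the root is the element at index
`⌊n/2⌋`, the left subtree is built from the prefix of length `⌊n/2⌋` and the right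
subtree from the suffix after position `⌊n/2⌋`. -/
def build : List α → BTree α
  | [] => nil
  | x :: xs =>
      node (build ((x :: xs).take ((x :: xs).length / 2)))
        ((x :: xs).getD ((x :: xs).length / 2) x)
        (build ((x :: xs).drop ((x :: xs).length / 2 + 1)))
  termination_by L => L.length
  decreasing_by
    · simp [List.length_take]; omega
    · simp [List.length_drop] <;> omega

/-- Height of a tree (`0` for the empty tree). -/
def height : BTree α → ℕ
  | nil => 0
  | node l _ r => 1 + max (height l) (height r)

/-- building a tree from a list of length `n` by recursive bisection
yields a tree of height `⌈log₂ (n + 1)⌉`; in particular the height is exactly `k`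
when `n = 2 ^ k - 1`. -/
theorem height_build (L : List α) :
    height (build L) = Nat.clog 2 (L.length + 1) ∧
    ∀ k : ℕ, L.length = 2 ^ k - 1 → height (build L) = k := by
  have main : ∀ n (L : List α), L.length = n →
      height (build L) = Nat.clog 2 (n + 1) := by
    intro n
    induction n using Nat.strong_induction_on with
    | _ n ih =>
      intro L hL
      match L, n, hL with
      | [], _, rfl => simp [build, height, Nat.clog]
      | x :: xs, _, rfl =>
        rw [build]
        set L := x :: xs with hLdef
        have hn : 1 ≤ L.length := by simp [hLdef]
        have hlt : L.length / 2 < L.length := by omega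
        have h1 : (L.take (L.length / 2)).length = L.length / 2 := by
          simp [List.length_take]; omega
        have h2 : (L.drop (L.length / 2 + 1)).length = L.length - (L.length / 2 + 1) := by
          simp [List.length_drop]
        rw [height, ih _ hlt _ h1, ih _ (by omega) _ h2]
        have hmax : max (Nat.clog 2 (L.length / 2 + 1))
            (Nat.clog 2 (L.length - (L.length / 2 + 1) + 1))
            = Nat.clog 2 (L.length / 2 + 1) := by
          apply max_eq_left
          exact Nat.clog_mono_right 2 (by omega)
        rw [hmax]
        have hrec : Nat.clog 2 (L.length + 1) = Nat.clog 2 (L.length / 2 + 1) + 1 := by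
          rw [Nat.clog_of_two_le (by norm_num) (by omega)]
          congr 2
          omega
        rw [hrec]; omega
  refine ⟨main _ L rfl, fun k hk => ?_⟩
  rw [main _ L rfl, hk]
  have : 2 ^ k - 1 + 1 = 2 ^ k := by
    have := Nat.one_le_two_pow (n := k); omega
  rw [this, Nat.clog_pow 2 k (by norm_num)]

end BTree
end

section
/- Let t be a binary tree and let p : List Bool be a valid path from the root of t (false = go to left child, true = go to right child), ending at a node v. Define the path-sum Φ(p) as follows: the root of t contributes size(left subtree of root) + 1; thereafter, each step from the current node to its left child c contributes −(size of the right subtree of c) − 1, and each step to its right child c contributes (size of the left subtree of c) + 1. Then Φ(p) equals the 1-based position of the node v in the in-order traversal of t. -/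
namespace BTree

variable {α : Type*}

/-- Follow a path from the root (`false` = left child, `true` = right child),
returning the subtree reached, or `none` if the path falls off the tree. -/
def follow : BTree α → List Bool → Option (BTree α)
  | t, [] => some t
  | nil, _ :: _ => none
  | node l _ r, b :: p => follow (if b then r else l) p

/-- Contribution of one step into the child `c`: `-(size of right subtree of c) - 1`
when stepping to a left child, `(size of left subtree of c) + 1` when stepping to a
right child. -/
def stepSum : BTree α → List Bool → ℤ
  | nil, _ => 0
  | node _ _ _, [] => 0
  | node l _ _, false :: p =>
      (match l with
       | nil => 0
       | node _ _ lr => -(size lr : ℤ) - 1) + stepSum l p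
  | node _ _ r, true :: p =>
      (match r with
       | nil => 0
       | node rl _ _ => (size rl : ℤ) + 1) + stepSum r p

/-- The path-sum `Φ`: the root contributes `size (left subtree of root) + 1`, and each
later step contributes `stepSum`-style flexions and fixed countings. -/
def phi : BTree α → List Bool → ℤ
  | nil, _ => 0
  | node l a r, p => (size l : ℤ) + 1 + stepSum (node l a r) p

/-- The 1-based position, in the in-order traversal, of the node reached by a path. -/
def pos1 : BTree α → List Bool → ℤ
  | nil, _ => 0
  | node l _ _, [] => (size l : ℤ) + 1
  | node l _ r, b :: p => if b then (size l : ℤ) + 1 + pos1 r p else pos1 l p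

lemma length_inorder (t : BTree α) : (inorder t).length = size t := by
  induction t with
  | nil => simp [inorder, size]
  | node l a r ihl ihr => simp [inorder, size, ihl, ihr]; omega

lemma phi_eq_pos1 (p : List Bool) (t l r : BTree α) (v : α)
    (h : follow t p = some (node l v r)) : phi t p = pos1 t p := by
  induction p generalizing t l r v with
  | nil =>
    simp [follow] at h
    subst h
    simp [phi, pos1, stepSum]
  | cons b p ih =>
    cases t with
    | nil => simp [follow] at h
    | node tl ta tr =>
      simp only [follow] at h
      cases b with
      | false =>
        simp only [Bool.false_eq_true, if_false] at h
        cases tl with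
        | nil => cases p <;> simp [follow] at h
        | node ll la lr =>
          have := ih _ _ _ _ h
          simp only [phi, stepSum, pos1, Bool.false_eq_true, if_false] at this ⊢
          push_cast [size] at this ⊢
          omega
      | true =>
        simp only [reduceIte] at h
        cases tr with
        | nil => cases p <;> simp [follow] at h
        | node rl ra rr =>
          have := ih _ _ _ _ h
          simp only [phi, stepSum, pos1, reduceIte] at this ⊢
          push_cast [size] at this
          omega

lemma pos1_spec (p : List Bool) (t l r : BTree α) (v : α)
    (h : follow t p = some (node l v r)) :
    1 ≤ pos1 t p ∧ (inorder t)[(pos1 t p).toNat - 1]? = some v := by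
  induction p generalizing t l r v with
  | nil =>
    simp [follow] at h
    subst h
    refine ⟨by simp [pos1], ?_⟩
    simp only [pos1, inorder]
    have hidx : (((size l : ℤ)) + 1).toNat - 1 = (inorder l).length := by
      simp [length_inorder]
    rw [hidx, List.getElem?_append_left (by simp), List.getElem?_append_right le_rfl]
    simp
  | cons b p ih =>
    cases t with
    | nil => simp [follow] at h
    | node tl ta tr =>
      simp only [follow] at h
      cases b with
      | false =>
        simp only [Bool.false_eq_true, if_false] at h
        obtain ⟨h1, h2⟩ := ih _ _ _ _ h
        simp only [pos1, Bool.false_eq_true, if_false, inorder]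
        refine ⟨h1, ?_⟩
        rw [List.append_assoc, List.getElem?_append_left]
        · exact h2
        · have := (List.getElem?_eq_some_iff.mp h2).1
          omega
      | true =>
        simp only [reduceIte] at h
        obtain ⟨h1, h2⟩ := ih _ _ _ _ h
        simp only [pos1, reduceIte, inorder]
        refine ⟨by omega, ?_⟩
        have hp : ((tl.size : ℤ) + 1 + pos1 tr p).toNat - 1
            = (inorder tl).length + ((pos1 tr p).toNat - 1 + 1) := by
          simp [length_inorder]; omega
        rw [hp, List.append_assoc, List.getElem?_append_right (by omega)]
        have : (inorder tl).length + ((pos1 tr p).toNat - 1 + 1) - (inorder tl).length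
            = (pos1 tr p).toNat - 1 + 1 := by omega
        rw [this, List.singleton_append, List.getElem?_cons_succ]
        exact h2

/-- for a valid path `p` ending at a node carrying the key `v`, the
path-sum `Φ(p)` equals the 1-based position of that node in the in-order traversal. -/
theorem phi_eq_inorder_position (t : BTree α) (p : List Bool) (l r : BTree α) (v : α)
    (h : follow t p = some (node l v r)) :
    phi t p = pos1 t p ∧ (inorder t)[(phi t p).toNat - 1]? = some v := by
  have h1 := phi_eq_pos1 p t l r v h
  have h2 := pos1_spec p t l r v h
  exact ⟨h1, h1 ▸ h2.2⟩

end BTree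
end
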